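/- Let F be a field, k ≥ 1, and let (u_n) be a sequence in F satisfying the linear recurrence u_n = a_{k−1}u_{n−1} + ⋯ + a₀u_{n−k} for n ≥ k. Define the k×k matrices A (first row equal to (u_{k−1}, …, u₁, u₀) and all other rows zero), B (the companion-type matrix with first column (a_{k−1}, …, a₁, a₀)ᵀ, the (i, i+1) entries equal to 1 for i = 1,…,k−1, and all other entries zero), and C (with (k,k)-entry 1 and all other entries zero). Then for all m, ℓ ≥ 1 and n ≥ 0, the product A^m B^n C^ℓ has every entry zero except the (1,k)-entry, which equals u_{k−1}^{m−1} · u_n. -/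
import Mathlib


theorem abc_product_entries
    {F : Type*} [Field F] {k : ℕ} (hk : 0 < k) (u : ℕ → F) (a : ℕ → F)
    (hrec : ∀ n, k ≤ n → u n = ∑ i ∈ Finset.range k, a i * u (n - k + i))
    (A B C : Matrix (Fin k) (Fin k) F)
    (hA : ∀ i j : Fin k, A i j = if (i : ℕ) = 0 then u (k - 1 - (j : ℕ)) else 0)
    (hB : ∀ i j : Fin k, B i j =
      if (j : ℕ) = 0 then a (k - 1 - (i : ℕ))
      else if (j : ℕ) = (i : ℕ) + 1 then 1 else 0)
    (hC : ∀ i j : Fin k, C i j =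
      if (i : ℕ) = k - 1 ∧ (j : ℕ) = k - 1 then 1 else 0) :
    ∀ m n ℓ : ℕ, 1 ≤ m → 1 ≤ ℓ → ∀ i j : Fin k,
      (A ^ m * B ^ n * C ^ ℓ) i j =
        if (i : ℕ) = 0 ∧ (j : ℕ) = k - 1 then u (k - 1) ^ (m - 1) * u n else 0 := by
  haveI : NeZero k := ⟨hk.ne'⟩
  set c := u (k - 1) with hc
  -- zero rows of A * X
  have hzero : ∀ (X : Matrix (Fin k) (Fin k) F) (i j : Fin k), (i : ℕ) ≠ 0 →
      (A * X) i j = 0 := by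
    intro X i j hi
    rw [Matrix.mul_apply]
    apply Finset.sum_eq_zero
    intro t _
    rw [hA]
    simp [hi]
  -- A * A = c • A
  have hA2 : A * A = c • A := by
    ext i j
    rw [Matrix.mul_apply, Finset.sum_eq_single (0 : Fin k)]
    · rw [hA, hA, Matrix.smul_apply, hA]
      simp only [Fin.val_zero, smul_eq_mul]
      split_ifs <;> simp [hc]
    · intro t _ ht
      have : (t : ℕ) ≠ 0 := fun h => ht (Fin.ext h)
      rw [hA t j]
      simp [this]
    · simp
  -- A ^ m = c^(m-1) • A for m ≥ 1
  have hApow : ∀ m : ℕ, 1 ≤ m → A ^ m = c ^ (m - 1) • A := by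
    intro m hm
    induction m with
    | zero => omega
    | succ m ih =>
      rcases Nat.eq_or_lt_of_le hm with h | h
      · simp [← h]
      · have hm1 : 1 ≤ m := by omega
        rw [pow_succ, ih hm1, Matrix.smul_mul, hA2, smul_smul]
        congr 1
        rw [← pow_succ]
        congr 1
        omega
  -- first row of A * B ^ n
  have hrow : ∀ n : ℕ, ∀ i j : Fin k, (i : ℕ) = 0 →
      (A * B ^ n) i j = u (n + (k - 1 - (j : ℕ))) := by
    intro n
    induction n with
    | zero =>
      intro i j hi
      simp only [pow_zero, Matrix.mul_one, hA, hi, if_true, Nat.zero_add]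
    | succ n ih =>
      intro i j hi
      rw [pow_succ, ← Matrix.mul_assoc, Matrix.mul_apply]
      have hj : (j : ℕ) < k := j.isLt
      by_cases hj0 : (j : ℕ) = 0
      · have : ∀ t : Fin k, (A * B ^ n) i t * B t j =
            u (n + (k - 1 - (t : ℕ))) * a (k - 1 - (t : ℕ)) := by
          intro t
          rw [ih i t hi, hB]
          simp [hj0]
        rw [Finset.sum_congr rfl (fun t _ => this t)]
        rw [Fin.sum_univ_eq_sum_range (fun t => u (n + (k - 1 - t)) * a (k - 1 - t))]
        have hrefl := Finset.sum_range_reflect (fun t => u (n + t) * a t) k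
        have heq : ∀ t ∈ Finset.range k,
            u (n + (k - 1 - t)) * a (k - 1 - t) =
            (fun t => u (n + t) * a t) (k - 1 - t) := by intro t _; rfl
        rw [Finset.sum_congr rfl heq, hrefl]
        have := hrec (n + k) (by omega)
        have harg : ∀ t ∈ Finset.range k, a t * u (n + k - k + t) = a t * u (n + t) := by
          intro t _
          congr 2
          omega
        rw [Finset.sum_congr rfl harg] at this
        have hgoal : n + 1 + (k - 1 - (j : ℕ)) = n + k := by omega
        rw [hgoal, this]
        apply Finset.sum_congr rfl
        intro t _; ring
      · set t0 : Fin k := ⟨(j : ℕ) - 1, by omega⟩ with ht0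
        rw [Finset.sum_eq_single t0]
        · rw [ih i t0 hi, hB]
          have h1 : (j : ℕ) = (t0 : ℕ) + 1 := by
            show (j : ℕ) = (j : ℕ) - 1 + 1
            omega
          rw [if_neg hj0, if_pos h1, mul_one]
          congr 1
          show n + (k - 1 - ((j : ℕ) - 1)) = n + 1 + (k - 1 - (j : ℕ))
          omega
        · intro t _ ht
          rw [hB]
          have : (j : ℕ) ≠ (t : ℕ) + 1 := by
            intro h
            apply ht
            apply Fin.ext
            show (t : ℕ) = (j : ℕ) - 1
            omega
          simp [hj0, this]
        · simp
  set e : Fin k := ⟨k - 1, by omega⟩ with he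
  -- C is idempotent
  have hC2 : C * C = C := by
    ext i j
    rw [Matrix.mul_apply, Finset.sum_eq_single e]
    · rw [hC, hC, hC]
      have : (e : ℕ) = k - 1 := rfl
      split_ifs <;> simp_all
    · intro t _ ht
      have : (t : ℕ) ≠ k - 1 := by
        intro h
        exact ht (Fin.ext (by simp [he, h]))
      rw [hC]
      simp [this]
    · simp
  have hCpow : ∀ ℓ : ℕ, 1 ≤ ℓ → C ^ ℓ = C := by
    intro ℓ hℓ
    induction ℓ with
    | zero => omega
    | succ ℓ ih =>
      rcases Nat.eq_or_lt_of_le hℓ with h | h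
      · simp [← h]
      · rw [pow_succ, ih (by omega), hC2]
  -- main computation
  intro m n ℓ hm hℓ i j
  rw [hApow m hm, hCpow ℓ hℓ, Matrix.smul_mul, Matrix.smul_mul, Matrix.smul_apply,
    smul_eq_mul]
  have hMC : (A * B ^ n * C) i j =
      if (i : ℕ) = 0 ∧ (j : ℕ) = k - 1 then u n else 0 := by
    rw [Matrix.mul_apply, Finset.sum_eq_single e]
    · by_cases hi : (i : ℕ) = 0
      · rw [hrow n i e hi, hC]
        have he' : (e : ℕ) = k - 1 := rfl
        have : k - 1 - (e : ℕ) = 0 := by omega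
        rw [this, Nat.add_zero, he']
        by_cases hj : (j : ℕ) = k - 1 <;> simp [hi, hj]
      · rw [hzero _ i e hi]
        simp [hi]
    · intro t _ ht
      have : (t : ℕ) ≠ k - 1 := by
        intro h
        exact ht (Fin.ext (by simp [he, h]))
      rw [hC]
      simp [this]
    · simp
  rw [hMC]
  split_ifs <;> simp
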